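/- Let δ > 0, β > 0 and define f : [0,1] → ℝ by f(x) = sinh(δ√(1-x²))/(cosh(δ√(1-x²)) + cosh(β√(1-x²))). Then for all t ∈ [0,1), |f'(t)| ≤ c·t/√(1-t²), where c = [δ + δ·cosh(δ)cosh(β) + β·sinh(δ)sinh(β)]/4. -/

import Mathlib

noncomputable def tempFactor (δ β x : ℝ) : ℝ :=
  Real.sinh (δ * Real.sqrt (1 - x ^ 2)) /
    (Real.cosh (δ * Real.sqrt (1 - x ^ 2)) + Real.cosh (β * Real.sqrt (1 - x ^ 2)))


lemma tempFactor_num_bound (δ β s : ℝ) (hδ : 0 < δ) (hβ : 0 < β)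
    (hs0 : 0 ≤ s) (hs1 : s ≤ 1) :
    |δ + δ * (Real.cosh (δ * s) * Real.cosh (β * s))
      - β * (Real.sinh (δ * s) * Real.sinh (β * s))|
      ≤ δ + δ * Real.cosh δ * Real.cosh β + β * Real.sinh δ * Real.sinh β := by
  have hcoshδ : Real.cosh (δ * s) ≤ Real.cosh δ := by
    rw [Real.cosh_le_cosh, abs_of_nonneg (by positivity), abs_of_nonneg hδ.le]
    nlinarith
  have hcoshβ : Real.cosh (β * s) ≤ Real.cosh β := by
    rw [Real.cosh_le_cosh, abs_of_nonneg (by positivity), abs_of_nonneg hβ.le]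
    nlinarith
  have hsinhδ : Real.sinh (δ * s) ≤ Real.sinh δ := by
    rw [Real.sinh_le_sinh]; nlinarith
  have hsinhβ : Real.sinh (β * s) ≤ Real.sinh β := by
    rw [Real.sinh_le_sinh]; nlinarith
  have hsinhδ0 : 0 ≤ Real.sinh (δ * s) := by
    rw [← Real.sinh_zero, Real.sinh_le_sinh]; positivity
  have hsinhβ0 : 0 ≤ Real.sinh (β * s) := by
    rw [← Real.sinh_zero, Real.sinh_le_sinh]; positivity
  have hcosh1δ : (1:ℝ) ≤ Real.cosh (δ * s) := Real.one_le_cosh _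
  have hcosh1β : (1:ℝ) ≤ Real.cosh (β * s) := Real.one_le_cosh _
  have hccs : Real.cosh (δ * s) * Real.cosh (β * s) ≤ Real.cosh δ * Real.cosh β :=
    mul_le_mul hcoshδ hcoshβ (by linarith) (by linarith)
  have hsss : Real.sinh (δ * s) * Real.sinh (β * s) ≤ Real.sinh δ * Real.sinh β :=
    mul_le_mul hsinhδ hsinhβ hsinhβ0 (by linarith)
  have hA : β * (Real.sinh (δ * s) * Real.sinh (β * s)) ≤ β * (Real.sinh δ * Real.sinh β) :=
    mul_le_mul_of_nonneg_left hsss hβ.le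
  have hB : 0 ≤ β * (Real.sinh (δ * s) * Real.sinh (β * s)) :=
    mul_nonneg hβ.le (mul_nonneg hsinhδ0 hsinhβ0)
  have hCc : δ * (Real.cosh (δ * s) * Real.cosh (β * s)) ≤ δ * (Real.cosh δ * Real.cosh β) :=
    mul_le_mul_of_nonneg_left hccs hδ.le
  have hB2 : 0 ≤ δ * (Real.cosh (δ * s) * Real.cosh (β * s)) :=
    mul_nonneg hδ.le (by nlinarith)
  rw [abs_le]
  constructor <;> nlinarith

theorem tempFactor_deriv_bound (δ β : ℝ) (hδ : 0 < δ) (hβ : 0 < β)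
    (t : ℝ) (ht : t ∈ Set.Ico (0 : ℝ) 1) (d : ℝ)
    (hd : HasDerivAt (tempFactor δ β) d t) :
    |d| ≤ ((δ + δ * Real.cosh δ * Real.cosh β + β * Real.sinh δ * Real.sinh β) / 4) *
      t / Real.sqrt (1 - t ^ 2) := by
  obtain ⟨ht0, ht1⟩ := ht
  have h1t : 0 < 1 - t ^ 2 := by nlinarith
  set s := Real.sqrt (1 - t ^ 2) with hs_def
  have hs_pos : 0 < s := Real.sqrt_pos.mpr h1t
  have hs_le : s ≤ 1 := Real.sqrt_le_one.mpr (by nlinarith)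
  -- derivative of inner sqrt
  have hinner : HasDerivAt (fun x : ℝ => 1 - x ^ 2) (-(2 * t)) t := by
    simpa using (hasDerivAt_pow 2 t).const_sub 1
  have hφ : HasDerivAt (fun x : ℝ => Real.sqrt (1 - x ^ 2)) (-(2 * t) / (2 * s)) t :=
    hinner.sqrt (by positivity)
  -- derivative of the outer function
  set D : ℝ := Real.cosh (δ * s) + Real.cosh (β * s) with hD_def
  have hD2 : 2 ≤ D := by
    have := Real.one_le_cosh (δ * s)
    have := Real.one_le_cosh (β * s)
    linarith
  have hDne : D ≠ 0 := by linarith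
  have ha : HasDerivAt (fun y : ℝ => Real.sinh (δ * y)) (Real.cosh (δ * s) * δ) s := by
    have := ((hasDerivAt_id s).const_mul δ).sinh
    simpa using this
  have hb : HasDerivAt (fun y : ℝ => Real.cosh (δ * y) + Real.cosh (β * y))
      (Real.sinh (δ * s) * δ + Real.sinh (β * s) * β) s := by
    have h1 := ((hasDerivAt_id s).const_mul δ).cosh
    have h2 := ((hasDerivAt_id s).const_mul β).cosh
    have h3 := h1.add h2
    simp at h3
    exact h3
  have hg : HasDerivAt (fun y : ℝ => Real.sinh (δ * y) / (Real.cosh (δ * y) + Real.cosh (β * y)))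
      ((Real.cosh (δ * s) * δ * D - Real.sinh (δ * s) *
        (Real.sinh (δ * s) * δ + Real.sinh (β * s) * β)) / D ^ 2) s :=
    ha.div hb hDne
  have hcomp : HasDerivAt (tempFactor δ β)
      (((Real.cosh (δ * s) * δ * D - Real.sinh (δ * s) *
        (Real.sinh (δ * s) * δ + Real.sinh (β * s) * β)) / D ^ 2) * (-(2 * t) / (2 * s))) t := by
    have := hg.comp t hφ
    exact this
  have hd_eq := hd.unique hcomp
  -- numerator simplification and bound
  set N : ℝ := Real.cosh (δ * s) * δ * D - Real.sinh (δ * s) *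
      (Real.sinh (δ * s) * δ + Real.sinh (β * s) * β) with hN_def
  have hNsimp : N = δ + δ * Real.cosh (δ * s) * Real.cosh (β * s)
      - β * Real.sinh (δ * s) * Real.sinh (β * s) := by
    have hid := Real.cosh_sq_sub_sinh_sq (δ * s)
    rw [hN_def, hD_def]; nlinarith [hid]
  set C : ℝ := δ + δ * Real.cosh δ * Real.cosh β + β * Real.sinh δ * Real.sinh β with hC_def
  have hNbound : |N| ≤ C := by
    have := tempFactor_num_bound δ β s hδ hβ hs_pos.le hs_le
    rw [hNsimp]
    calc |δ + δ * Real.cosh (δ * s) * Real.cosh (β * s)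
        - β * Real.sinh (δ * s) * Real.sinh (β * s)|
        = |δ + δ * (Real.cosh (δ * s) * Real.cosh (β * s))
          - β * (Real.sinh (δ * s) * Real.sinh (β * s))| := by ring_nf
      _ ≤ C := this
  have hD2sq : (4:ℝ) ≤ D ^ 2 := by
    calc (4:ℝ) = 2 ^ 2 := by norm_num
      _ ≤ D ^ 2 := pow_le_pow_left₀ (by norm_num) hD2 2
  have hC0 : 0 ≤ C := le_trans (abs_nonneg N) hNbound
  -- conclude
  rw [hd_eq]
  have hφval : -(2 * t) / (2 * s) = -(t / s) := by
    field_simp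
  rw [hφval]
  rw [abs_mul, abs_div, abs_neg, abs_div]
  rw [abs_of_nonneg ht0, abs_of_nonneg hs_pos.le, abs_of_nonneg (by positivity : (0:ℝ) ≤ D ^ 2)]
  have key : |N| / D ^ 2 ≤ C / 4 :=
    div_le_div₀ hC0 hNbound (by norm_num) hD2sq
  calc |N| / D ^ 2 * (t / s) ≤ C / 4 * (t / s) := by
        apply mul_le_mul_of_nonneg_right key (by positivity)
    _ = C / 4 * t / s := by ring
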